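/- Let θ ∈ (0,1], a > 1 and b > 0, and let f(s) = 1 − (a·(1−s)^{−θ} + b)^{−1/θ}. Then for every s ∈ [0,1), the conditional generating function h_n(s) = (f^{∘n}(s) − f^{∘n}(0))/(1 − f^{∘n}(0)) converges as n → ∞ to 1 − (a'·(1−s)^{−θ} + b')^{−1/θ}, where a' = (a−1)/(a+b−1) and b' = b/(a+b−1). That is, the Yaglom quasi-stationary limit of a subcritical Galton–Watson process with offspring law PF(θ,a,b), conditioned on survival, is the power-fractional law PF(θ, (a−1)/(a+b−1), b/(a+b−1)). -/

import Mathlib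

open Filter Real

/-- in the subcritical case `a > 1`, the conditional generating functions
`h_n(s) = (f^[n](s) - f^[n](0))/(1 - f^[n](0))` converge pointwise on `[0,1)` to the pgf of
`PF(θ, (a-1)/(a+b-1), b/(a+b-1))` (the Yaglom quasi-stationary limit law). -/
theorem pf_yaglom_limit (θ a b : ℝ) (hθ : θ ∈ Set.Ioc (0:ℝ) 1)
    (ha : 1 < a) (hb : 0 < b) (f : ℝ → ℝ)
    (hf : ∀ s, f s = 1 - (a * (1 - s) ^ (-θ) + b) ^ (-1/θ)) :
    ∀ s ∈ Set.Ico (0:ℝ) 1,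
      Filter.Tendsto (fun n : ℕ => (f^[n] s - f^[n] 0) / (1 - f^[n] 0)) Filter.atTop
        (nhds (1 - ((a - 1) / (a + b - 1) * (1 - s) ^ (-θ) + b / (a + b - 1)) ^ (-1/θ))) := by
  obtain ⟨hθ0, hθ1⟩ := hθ
  have hθne : θ ≠ 0 := ne_of_gt hθ0
  intro s hs
  obtain ⟨hs0, hs1⟩ := hs
  have ha0 : (0:ℝ) < a := by linarith
  have ha1 : a - 1 ≠ 0 := by intro h; nlinarith
  have hexp : (-θ) * (-1/θ) = 1 := by field_simp
  have hexp' : (-1/θ) * (-θ) = 1 := by field_simp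
  -- closed form for the iterates
  have key : ∀ t : ℝ, t < 1 → ∀ n : ℕ,
      f^[n] t = 1 - (a ^ n * (1 - t) ^ (-θ) + b * (a ^ n - 1) / (a - 1)) ^ (-1/θ) := by
    intro t ht n
    have hut : 0 < (1 - t) ^ (-θ) := Real.rpow_pos_of_pos (by linarith) _
    induction n with
    | zero =>
      simp only [Function.iterate_zero, id_eq, pow_zero, one_mul, sub_self, zero_mul,
        mul_zero, zero_div, add_zero]
      rw [← Real.rpow_mul (by linarith : (0:ℝ) ≤ 1 - t), hexp, Real.rpow_one]
      ring
    | succ n ih =>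
      have hpow1 : (1:ℝ) ≤ a ^ n := one_le_pow₀ ha.le
      have hBn : 0 ≤ b * (a ^ n - 1) / (a - 1) := by
        apply div_nonneg _ (by linarith)
        nlinarith
      have hT : 0 < a ^ n * (1 - t) ^ (-θ) + b * (a ^ n - 1) / (a - 1) := by
        have : 0 < a ^ n * (1 - t) ^ (-θ) := by positivity
        linarith
      rw [Function.iterate_succ_apply', ih, hf]
      have h1 : (1 : ℝ) - (1 - (a ^ n * (1 - t) ^ (-θ) + b * (a ^ n - 1) / (a - 1)) ^ (-1/θ))
          = (a ^ n * (1 - t) ^ (-θ) + b * (a ^ n - 1) / (a - 1)) ^ (-1/θ) := by ring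
      rw [h1, ← Real.rpow_mul hT.le, hexp', Real.rpow_one]
      congr 1
      congr 1
      field_simp
      ring
  -- abbreviations
  set u : ℝ := (1 - s) ^ (-θ) with hu_def
  have hu : 0 < u := Real.rpow_pos_of_pos (by linarith) _
  have hTs : ∀ n : ℕ, 0 < a ^ n * u + b * (a ^ n - 1) / (a - 1) := by
    intro n
    have hpow1 : (1:ℝ) ≤ a ^ n := one_le_pow₀ ha.le
    have hBn : 0 ≤ b * (a ^ n - 1) / (a - 1) := by
      apply div_nonneg _ (by linarith); nlinarith
    have : 0 < a ^ n * u := by positivity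
    linarith
  have hT0 : ∀ n : ℕ, 0 < a ^ n + b * (a ^ n - 1) / (a - 1) := by
    intro n
    have hpow1 : (1:ℝ) ≤ a ^ n := one_le_pow₀ ha.le
    have hBn : 0 ≤ b * (a ^ n - 1) / (a - 1) := by
      apply div_nonneg _ (by linarith); nlinarith
    linarith
  -- rewrite h_n
  have heq : ∀ n : ℕ, (f^[n] s - f^[n] 0) / (1 - f^[n] 0)
      = 1 - ((a ^ n * u + b * (a ^ n - 1) / (a - 1)) / (a ^ n + b * (a ^ n - 1) / (a - 1))) ^ (-1/θ) := by
    intro n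
    have k0 := key 0 (by norm_num) n
    have ks := key s hs1 n
    rw [ks, k0]
    simp only [sub_zero, Real.one_rpow, mul_one]
    have hd : (0:ℝ) < (a ^ n + b * (a ^ n - 1) / (a - 1)) ^ (-1/θ) :=
      Real.rpow_pos_of_pos (hT0 n) _
    have e1 : (1 - (a ^ n * u + b * (a ^ n - 1) / (a - 1)) ^ (-1/θ))
        - (1 - (a ^ n + b * (a ^ n - 1) / (a - 1)) ^ (-1/θ))
        = (a ^ n + b * (a ^ n - 1) / (a - 1)) ^ (-1/θ)
          - (a ^ n * u + b * (a ^ n - 1) / (a - 1)) ^ (-1/θ) := by ring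
    have e2 : 1 - (1 - (a ^ n + b * (a ^ n - 1) / (a - 1)) ^ (-1/θ))
        = (a ^ n + b * (a ^ n - 1) / (a - 1)) ^ (-1/θ) := by ring
    rw [e1, e2, Real.div_rpow (hTs n).le (hT0 n).le, sub_div, div_self hd.ne']
  -- limit of the inner ratio
  have hden : (0:ℝ) < (a - 1) + b := by linarith
  have hL : 0 < ((a - 1) * u + b) / ((a - 1) + b) := by
    apply div_pos _ hden
    nlinarith
  have hinner : Tendsto (fun n : ℕ => (a ^ n * u + b * (a ^ n - 1) / (a - 1)) / (a ^ n + b * (a ^ n - 1) / (a - 1)))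
      atTop (nhds (((a - 1) * u + b) / ((a - 1) + b))) := by
    have hg : Tendsto (fun n : ℕ => (a ^ n)⁻¹) atTop (nhds 0) := by
      simpa [inv_pow] using
        tendsto_pow_atTop_nhds_zero_of_lt_one (le_of_lt (inv_pos.mpr ha0))
          ((inv_lt_one₀ ha0).mpr ha)
    have hcont : ContinuousAt (fun t : ℝ => ((a - 1) * u + b * (1 - t)) / ((a - 1) + b * (1 - t))) 0 := by
      apply ContinuousAt.div
      · fun_prop
      · fun_prop
      · simpa using hden.ne'
    have hcomp := hcont.tendsto.comp hg
    simp only [Function.comp_def] at hcomp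
    have : (((a - 1) * u + b * (1 - (0:ℝ))) / ((a - 1) + b * (1 - (0:ℝ))))
        = ((a - 1) * u + b) / ((a - 1) + b) := by norm_num
    rw [this] at hcomp
    refine hcomp.congr fun n => ?_
    have hpn : (a:ℝ) ^ n ≠ 0 := (pow_pos ha0 n).ne'
    have hpow1 : (1:ℝ) ≤ a ^ n := one_le_pow₀ ha.le
    have hd1 : (0:ℝ) < a - 1 + b * (1 - (a ^ n)⁻¹) := by
      have h1 : (a ^ n)⁻¹ ≤ 1 := inv_le_one_of_one_le₀ hpow1
      have : 0 ≤ b * (1 - (a ^ n)⁻¹) := mul_nonneg hb.le (by linarith)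
      linarith
    rw [div_eq_div_iff hd1.ne' (hT0 n).ne']
    field_simp
  -- outer continuity
  have houter : ContinuousAt (fun x : ℝ => 1 - x ^ (-1/θ)) (((a - 1) * u + b) / ((a - 1) + b)) := by
    apply continuousAt_const.sub
    exact Real.continuousAt_rpow_const _ _ (Or.inl hL.ne')
  have hfinal := houter.tendsto.comp hinner
  simp only [Function.comp_def] at hfinal
  have hval : ((a - 1) / (a + b - 1) * u + b / (a + b - 1)) = ((a - 1) * u + b) / ((a - 1) + b) := by
    have h0 : a + b - 1 ≠ 0 := by linarith
    have h1 : a - 1 + b = a + b - 1 := by ring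
    rw [h1, div_mul_eq_mul_div, ← add_div]
  rw [hval]
  exact (Tendsto.congr (fun n => (heq n).symm)) hfinal
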